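/- Let d ≥ 1 and k ≥ 1. The set of polynomials p ∈ ℝ[x_1,…,x_d] of total degree at most k satisfying Δp = Σ_{i=1}^d ∂²p/∂x_i² = 0 is a linear subspace of dimension C(d+k−1, k) + C(d+k−2, k−1), where C(n, m) denotes the binomial coefficient. -/

import Mathlib

open MvPolynomial

lemma degree_single_one {σ : Type*} (i : σ) : (Finsupp.single i 1).degree = 1 := by
  simp [Finsupp.degree_apply, Finsupp.support_single_ne_zero i one_ne_zero]

lemma degree_add' {σ : Type*} (a b : σ →₀ ℕ) : (a + b).degree = a.degree + b.degree := by
  simp only [Finsupp.degree_eq_weight_one, map_add]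

lemma sub_single_add {σ : Type*} [DecidableEq σ] {v : σ →₀ ℕ} {i : σ} (h : v i ≠ 0) :
    (v - Finsupp.single i 1) + Finsupp.single i 1 = v := by
  ext j
  simp only [Finsupp.add_apply, Finsupp.sub_apply, Finsupp.single_apply]
  by_cases hj : i = j
  · subst hj; simp; omega
  · simp [hj]

variable {d : ℕ}

lemma degree_sub_single {v : Fin d →₀ ℕ} {i : Fin d} (h : v i ≠ 0) :
    (v - Finsupp.single i 1).degree = v.degree - 1 := by
  conv_rhs => rw [← sub_single_add h]
  rw [degree_add', degree_single_one]
  omega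

lemma pderiv_isHomogeneous {p : MvPolynomial (Fin d) ℝ} {n : ℕ} (i : Fin d)
    (hp : p.IsHomogeneous n) : (pderiv i p).IsHomogeneous (n - 1) := by
  conv_lhs => rw [p.as_sum]
  rw [map_sum]
  refine IsHomogeneous.sum _ _ _ fun v hv => ?_
  rw [pderiv_monomial]
  by_cases h : v i = 0
  · simp [h]
    exact isHomogeneous_zero _ _ _
  · refine isHomogeneous_monomial _ ?_
    rw [degree_sub_single h]
    have : v.degree = n := by
      by_contra hne
      exact (mem_support_iff.mp hv) (hp.coeff_eq_zero hne)
    omega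

lemma totalDegree_pderiv_le (i : Fin d) (p : MvPolynomial (Fin d) ℝ) :
    (pderiv i p).totalDegree ≤ p.totalDegree - 1 := by
  conv_lhs => rw [p.as_sum]
  rw [map_sum]
  refine (totalDegree_finset_sum _ _).trans (Finset.sup_le fun v hv => ?_)
  rw [pderiv_monomial]
  by_cases h : v i = 0
  · simp [h]
  · refine (totalDegree_monomial_le _ _).trans ?_
    have h1 : ((v - Finsupp.single i 1).sum fun _ => id) = (v - Finsupp.single i 1).degree := by
      rw [Finsupp.degree, Finsupp.sum]; rfl
    rw [h1, degree_sub_single h]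
    have h2 : v.degree ≤ p.totalDegree := by
      have := le_totalDegree hv
      rw [Finsupp.degree]
      exact le_trans (le_of_eq rfl) this
    omega

lemma euler_monomial (v : Fin d →₀ ℕ) (a : ℝ) :
    ∑ i : Fin d, X i * pderiv i (monomial v a) = v.degree • monomial v a := by
  have key : ∀ i : Fin d, X i * pderiv i (monomial v a) = (v i) • monomial v a := by
    intro i
    rw [pderiv_monomial]
    by_cases h : v i = 0
    · simp [h]
    · rw [X, monomial_mul, smul_monomial, one_mul, add_comm, sub_single_add h,
        nsmul_eq_mul, mul_comm a]
  rw [Finset.sum_congr rfl fun i _ => key i, ← Finset.sum_smul]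
  congr 1
  rw [Finsupp.degree_apply]
  exact (Finset.sum_subset (Finset.subset_univ _) (by
    intro x _ hx
    simpa using Finsupp.notMem_support_iff.mp hx)).symm

lemma euler {p : MvPolynomial (Fin d) ℝ} {n : ℕ} (hp : p.IsHomogeneous n) :
    ∑ i : Fin d, X i * pderiv i p = n • p := by
  conv_lhs => rw [p.as_sum]
  conv_rhs => rw [p.as_sum]
  simp only [map_sum, Finset.mul_sum, Finset.smul_sum]
  rw [Finset.sum_comm]
  refine Finset.sum_congr rfl fun v hv => ?_
  rw [euler_monomial]
  congr 1
  by_contra hne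
  exact (mem_support_iff.mp hv) (hp.coeff_eq_zero hne)

noncomputable def lap (d : ℕ) : MvPolynomial (Fin d) ℝ →ₗ[ℝ] MvPolynomial (Fin d) ℝ :=
  ∑ i : Fin d, ((pderiv i).toLinearMap ∘ₗ (pderiv i).toLinearMap)

lemma lap_apply (p : MvPolynomial (Fin d) ℝ) :
    lap d p = ∑ i : Fin d, pderiv i (pderiv i p) := by
  simp [lap, LinearMap.sum_apply]

noncomputable def rsq (d : ℕ) : MvPolynomial (Fin d) ℝ := ∑ i : Fin d, X i ^ 2

lemma isHomogeneous_rsq : (rsq d).IsHomogeneous 2 :=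
  IsHomogeneous.sum _ _ _ fun i _ => isHomogeneous_X_pow _ _

lemma pderiv_rsq (i : Fin d) : pderiv i (rsq d) = 2 * X i := by
  rw [rsq, map_sum]
  rw [Finset.sum_eq_single i (fun j _ hj => by
      rw [pderiv_pow, pderiv_X_of_ne hj]; ring) (by simp)]
  rw [pderiv_pow, pderiv_X_self]
  ring

lemma lap_isHomogeneous {p : MvPolynomial (Fin d) ℝ} {n : ℕ} (hp : p.IsHomogeneous n) :
    (lap d p).IsHomogeneous (n - 2) := by
  rw [lap_apply]
  refine IsHomogeneous.sum _ _ _ fun i _ => ?_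
  have := pderiv_isHomogeneous i (pderiv_isHomogeneous i hp)
  simpa [Nat.sub_sub] using this

lemma totalDegree_lap_le (p : MvPolynomial (Fin d) ℝ) :
    (lap d p).totalDegree ≤ p.totalDegree - 2 := by
  rw [lap_apply]
  refine (totalDegree_finset_sum _ _).trans (Finset.sup_le fun i _ => ?_)
  have h1 := totalDegree_pderiv_le i (pderiv i p)
  have h2 := totalDegree_pderiv_le i p
  omega

lemma key_identity (q : MvPolynomial (Fin d) ℝ) :
    lap d (rsq d * q) = (2 * d) • q + 4 • (∑ i : Fin d, X i * pderiv i q)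
      + rsq d * lap d q := by
  rw [lap_apply, lap_apply]
  have key : ∀ i : Fin d, pderiv i (pderiv i (rsq d * q)) =
      2 * q + 4 • (X i * pderiv i q) + rsq d * pderiv i (pderiv i q) := by
    intro i
    have h2 : pderiv i (2 : MvPolynomial (Fin d) ℝ) = 0 := by
      rw [show (2 : MvPolynomial (Fin d) ℝ) = C 2 from (map_ofNat C 2).symm, pderiv_C]
    simp only [pderiv_mul, pderiv_rsq, map_add, h2, pderiv_X_self, nsmul_eq_mul,
      pderiv_mul]
    push_cast
    ring
  rw [Finset.sum_congr rfl fun i _ => key i]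
  rw [Finset.sum_add_distrib, Finset.sum_add_distrib, Finset.sum_const, Finset.card_univ,
    Fintype.card_fin, ← Finset.smul_sum, ← Finset.mul_sum]
  congr 2
  rw [nsmul_eq_mul, nsmul_eq_mul]
  push_cast
  ring

lemma pderiv_eq_zero_of_totalDegree_eq_zero {p : MvPolynomial (Fin d) ℝ}
    (h : p.totalDegree = 0) (i : Fin d) : pderiv i p = 0 := by
  conv_lhs => rw [p.as_sum]
  rw [map_sum]
  refine Finset.sum_eq_zero fun m hm => ?_
  rw [pderiv_monomial, (totalDegree_eq_zero_iff _ p).mp h m hm i]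
  simp

lemma lap_eq_zero_of_totalDegree_le_one {q : MvPolynomial (Fin d) ℝ}
    (h : q.totalDegree ≤ 1) : lap d q = 0 := by
  rw [lap_apply]
  refine Finset.sum_eq_zero fun i _ => ?_
  have h1 : (pderiv i q).totalDegree = 0 := by
    have := totalDegree_pderiv_le i q
    omega
  rw [pderiv_eq_zero_of_totalDegree_eq_zero h1]

lemma nsmul_eq_zero' {c : ℕ} (hc : 0 < c) {q : MvPolynomial (Fin d) ℝ}
    (h : c • q = 0) : q = 0 := by
  have : (c : ℝ) • q = 0 := by rw [Nat.cast_smul_eq_nsmul]; exact h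
  have h2 : ((c : ℝ)⁻¹ * (c : ℝ)) • q = 0 := by rw [mul_smul, this, smul_zero]
  rwa [inv_mul_cancel₀ (by positivity), one_smul] at h2

lemma homog_inj : ∀ m : ℕ, ∀ c : ℕ, 0 < c → ∀ q : MvPolynomial (Fin d) ℝ,
    q.IsHomogeneous m → c • q + rsq d * lap d q = 0 → q = 0 := by
  intro m
  induction m using Nat.strong_induction_on with
  | _ m ih =>
    intro c hc q hq heq
    by_cases hm : m ≤ 1
    · have hlap : lap d q = 0 := lap_eq_zero_of_totalDegree_le_one (hq.totalDegree_le.trans hm)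
      rw [hlap, mul_zero, add_zero] at heq
      exact nsmul_eq_zero' hc heq
    · push_neg at hm
      set u := lap d q with hu_def
      have hu : u.IsHomogeneous (m - 2) := lap_isHomogeneous hq
      have heq2 : (c + 2 * d + 4 * (m - 2)) • u + rsq d * lap d u = 0 := by
        have := congrArg (lap d) heq
        rw [map_add, map_zero, map_nsmul, key_identity, euler hu] at this
        rw [← this]
        rw [smul_smul]
        rw [add_smul, add_smul]
        abel
      have hu0 : u = 0 := ih (m - 2) (by omega) _ (by omega) u hu heq2
      rw [hu0, mul_zero, add_zero] at heq
      exact nsmul_eq_zero' hc heq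

lemma lap_rsq_inj (hd : 1 ≤ d) (q : MvPolynomial (Fin d) ℝ)
    (h : lap d (rsq d * q) = 0) : q = 0 := by
  have comp : ∀ n, homogeneousComponent n q = 0 := by
    intro n
    by_cases hn : n ≤ q.totalDegree
    case neg => exact homogeneousComponent_eq_zero _ _ (by omega)
    set qn := homogeneousComponent n q with hqn_def
    have hqn : qn.IsHomogeneous n := homogeneousComponent_isHomogeneous n q
    have hdecomp : ∑ j ∈ Finset.range (q.totalDegree + 1),
        lap d (rsq d * homogeneousComponent j q) = 0 := by
      rw [← map_sum, ← Finset.mul_sum, sum_homogeneousComponent]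
      exact h
    have hmem : ∀ j, lap d (rsq d * homogeneousComponent j q) ∈
        homogeneousSubmodule (Fin d) ℝ j := by
      intro j
      rw [mem_homogeneousSubmodule]
      have : (rsq d * homogeneousComponent j q).IsHomogeneous (2 + j) :=
        isHomogeneous_rsq.mul (homogeneousComponent_isHomogeneous j q)
      simpa using lap_isHomogeneous this
    have hzn : lap d (rsq d * qn) = 0 := by
      have := congrArg (homogeneousComponent n) hdecomp
      rw [map_sum, map_zero] at this
      rw [Finset.sum_congr rfl (fun j _ => homogeneousComponent_of_mem (hmem j))] at this
      rwa [Finset.sum_ite_eq (Finset.range (q.totalDegree + 1)) n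
        (fun j => lap d (rsq d * homogeneousComponent j q)),
        if_pos (Finset.mem_range.mpr (by omega))] at this
    have hkey : (2 * d + 4 * n) • qn + rsq d * lap d qn = 0 := by
      rw [← hzn, key_identity, euler hqn, smul_smul, add_smul]
    exact homog_inj n (2 * d + 4 * n) (by omega) qn hqn hkey
  rw [← sum_homogeneousComponent q]
  exact Finset.sum_eq_zero fun j _ => comp j

instance finite_deg_le (d k : ℕ) : Finite {f : Fin d →₀ ℕ // f.degree ≤ k} :=
  (Finsupp.finite_of_degree_le k).to_subtype

instance finite_deg_eq (d k : ℕ) : Finite {f : Fin d →₀ ℕ // f.degree = k} :=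
  ((Finsupp.finite_of_degree_le k).subset (fun f hf => le_of_eq hf)).to_subtype

noncomputable def degEqEquivSym (d m : ℕ) :
    {f : Fin d →₀ ℕ // f.degree = m} ≃ Sym (Fin d) m where
  toFun f := ⟨Finsupp.toMultiset f.1, by
    rw [Finsupp.card_toMultiset]; exact f.2⟩
  invFun s := ⟨Multiset.toFinsupp s.1, by
    have h : Finsupp.toMultiset (Multiset.toFinsupp s.1) = s.1 :=
      Multiset.toFinsupp_toMultiset s.1
    calc (Multiset.toFinsupp s.1).degree
        = Multiset.card (Finsupp.toMultiset (Multiset.toFinsupp s.1)) :=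
          (Finsupp.card_toMultiset _).symm
      _ = Multiset.card s.1 := by rw [h]
      _ = m := s.2⟩
  left_inv f := Subtype.ext (Finsupp.toMultiset_toFinsupp f.1)
  right_inv s := Subtype.ext (Multiset.toFinsupp_toMultiset s.1)

lemma card_deg_eq (d m : ℕ) :
    Nat.card {f : Fin d →₀ ℕ // f.degree = m} = (d + m - 1).choose m := by
  rw [Nat.card_congr (degEqEquivSym d m), Nat.card_eq_fintype_card,
    Sym.card_sym_eq_choose, Fintype.card_fin]

lemma card_deg_le (d k : ℕ) :
    Nat.card {f : Fin d →₀ ℕ // f.degree ≤ k} = (d + k).choose k := by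
  induction k with
  | zero =>
    haveI : Unique {f : Fin d →₀ ℕ // f.degree ≤ 0} :=
      { default := ⟨0, by simp⟩
        uniq := fun f => Subtype.ext ((Finsupp.degree_eq_zero_iff f.1).mp
          (Nat.le_zero.mp f.2)) }
    rw [Nat.card_unique]
    simp
  | succ k ih =>
    have hdisj : Disjoint (fun f : Fin d →₀ ℕ => f.degree ≤ k)
        (fun f : Fin d →₀ ℕ => f.degree = k + 1) := by
      intro r h1 h2 f hf
      have ha := h1 f hf
      have hb := h2 f hf
      simp only at ha hb
      omega
    classical
    have e1 : {f : Fin d →₀ ℕ // f.degree ≤ k + 1} ≃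
        {f : Fin d →₀ ℕ // f.degree ≤ k ∨ f.degree = k + 1} :=
      Equiv.subtypeEquivRight (fun f => by omega)
    rw [Nat.card_congr (e1.trans (subtypeOrEquiv _ _ hdisj)), Nat.card_sum,
      ih, card_deg_eq]
    have h1 : d + (k + 1) - 1 = d + k := by omega
    rw [h1, show d + (k + 1) = (d + k) + 1 by omega, Nat.choose_succ_succ]

lemma finrank_restrictTotalDegree (d k : ℕ) :
    Module.finrank ℝ (restrictTotalDegree (Fin d) ℝ k) = (d + k).choose k := by
  classical
  haveI : Finite ↥{n : Fin d →₀ ℕ | (n.sum fun _ e => e) ≤ k} :=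
    finite_deg_le d k
  haveI : Fintype ↥{n : Fin d →₀ ℕ | (n.sum fun _ e => e) ≤ k} := Fintype.ofFinite _
  have hb := Module.finrank_eq_card_basis
    (basisRestrictSupport ℝ {n : Fin d →₀ ℕ | (n.sum fun _ e => e) ≤ k})
  rw [show restrictTotalDegree (Fin d) ℝ k =
    restrictSupport ℝ {n : Fin d →₀ ℕ | (n.sum fun _ e => e) ≤ k} from rfl, hb,
    ← Nat.card_eq_fintype_card]
  exact card_deg_le d k

lemma choose_arith (a b : ℕ) :
    (a + b + 3).choose (b + 2) =
      (a + b + 1).choose b + ((a + b + 2).choose (b + 2) + (a + b + 1).choose (b + 1)) := by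
  have h1 := Nat.choose_succ_succ (a + b + 2) (b + 1)
  have h2 := Nat.choose_succ_succ (a + b + 1) b
  have e1 : a + b + 2 + 1 = a + b + 3 := by ring
  have e2 : b + 1 + 1 = b + 2 := by ring
  have e3 : a + b + 1 + 1 = a + b + 2 := by ring
  simp only [Nat.succ_eq_add_one] at h1 h2
  rw [e1, e2] at h1
  rw [e3] at h2
  rw [h1, h2]
  ring

/-- The set of polynomials of total degree at most `k` in `d` variables that are annihilated
by the formal Laplacian is a linear subspace of dimension
`C(d+k-1, k) + C(d+k-2, k-1)`. -/
theorem stmt8 (d k : ℕ) (hd : 1 ≤ d) (hk : 1 ≤ k) :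
    ∃ S : Submodule ℝ (MvPolynomial (Fin d) ℝ),
      (S : Set (MvPolynomial (Fin d) ℝ)) =
        {p : MvPolynomial (Fin d) ℝ |
          p.totalDegree ≤ k ∧ (∑ i : Fin d, pderiv i (pderiv i p)) = 0} ∧
      Module.finrank ℝ S = Nat.choose (d + k - 1) k + Nat.choose (d + k - 2) (k - 1) := by
  rcases eq_or_lt_of_le hk with hk1 | hk2
  · -- k = 1 : every polynomial of degree ≤ 1 is harmonic
    subst hk1
    refine ⟨restrictTotalDegree (Fin d) ℝ 1, ?_, ?_⟩
    · ext p
      simp only [SetLike.mem_coe, mem_restrictTotalDegree, Set.mem_setOf_eq]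
      constructor
      · intro hp
        refine ⟨hp, ?_⟩
        have := lap_eq_zero_of_totalDegree_le_one hp
        rwa [lap_apply] at this
      · exact fun h => h.1
    · rw [finrank_restrictTotalDegree]
      simp [Nat.choose_one_right]
  · -- k ≥ 2
    have hk2' : 2 ≤ k := hk2
    set V := restrictTotalDegree (Fin d) ℝ k with hV
    set W := restrictTotalDegree (Fin d) ℝ (k - 2) with hW
    have hVW : ∀ p ∈ V, lap d p ∈ W := by
      intro p hp
      have hp2 : p.totalDegree ≤ k := (mem_restrictTotalDegree _ _ p).mp hp
      refine (mem_restrictTotalDegree _ _ _).mpr ?_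
      have := totalDegree_lap_le p
      omega
    set Δ' : V →ₗ[ℝ] W := (lap d).restrict hVW with hΔ'
    have hWW : ∀ q ∈ W, (lap d ∘ₗ LinearMap.mulLeft ℝ (rsq d)) q ∈ W := by
      intro q hq
      have hq2 : q.totalDegree ≤ k - 2 := (mem_restrictTotalDegree _ _ q).mp hq
      simp only [LinearMap.coe_comp, Function.comp_apply, LinearMap.mulLeft_apply]
      refine (mem_restrictTotalDegree _ _ _).mpr ?_
      have h1 : (rsq d * q).totalDegree ≤ k := by
        have := totalDegree_mul (rsq d) q
        have h2 : (rsq d).totalDegree ≤ 2 := isHomogeneous_rsq.totalDegree_le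
        omega
      have := totalDegree_lap_le (rsq d * q)
      omega
    set T' : W →ₗ[ℝ] W := (lap d ∘ₗ LinearMap.mulLeft ℝ (rsq d)).restrict hWW with hT'
    have hTinj : Function.Injective T' := by
      intro a b hab
      have h0 : T' (a - b) = 0 := by rw [map_sub, hab, sub_self]
      have h1 : lap d (rsq d * ((a : MvPolynomial (Fin d) ℝ) - b)) = 0 := by
        have := congrArg (Subtype.val) h0
        simpa [hT', LinearMap.restrict_apply] using this
      have := lap_rsq_inj hd _ h1
      have hab2 : (a : MvPolynomial (Fin d) ℝ) = b := by
        have := sub_eq_zero.mp this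
        exact this
      exact Subtype.ext hab2
    have hTsurj : Function.Surjective T' := LinearMap.injective_iff_surjective.mp hTinj
    have hΔsurj : Function.Surjective Δ' := by
      intro w
      obtain ⟨u, hu⟩ := hTsurj w
      have hmem : rsq d * (u : MvPolynomial (Fin d) ℝ) ∈ V := by
        refine (mem_restrictTotalDegree _ _ _).mpr ?_
        have := totalDegree_mul (rsq d) (u : MvPolynomial (Fin d) ℝ)
        have h2 : (rsq d).totalDegree ≤ 2 := isHomogeneous_rsq.totalDegree_le
        have h3 : (u : MvPolynomial (Fin d) ℝ).totalDegree ≤ k - 2 :=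
          (mem_restrictTotalDegree _ _ _).mp u.2
        omega
      refine ⟨⟨rsq d * (u : MvPolynomial (Fin d) ℝ), hmem⟩, ?_⟩
      apply Subtype.ext
      have := congrArg (Subtype.val) hu
      simpa [hΔ', hT', LinearMap.restrict_apply] using this
    refine ⟨Submodule.map V.subtype (LinearMap.ker Δ'), ?_, ?_⟩
    · ext p
      simp only [Submodule.map_coe, Set.mem_image, SetLike.mem_coe, LinearMap.mem_ker,
        Set.mem_setOf_eq]
      constructor
      · rintro ⟨v, hv, rfl⟩
        simp only [Submodule.coe_subtype]
        refine ⟨?_, ?_⟩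
        · exact (mem_restrictTotalDegree _ _ _).mp v.2
        · have := congrArg (Subtype.val) hv
          simp only [hΔ', LinearMap.restrict_apply, ZeroMemClass.coe_zero] at this
          rwa [lap_apply] at this
      · rintro ⟨h1, h2⟩
        refine ⟨⟨p, (mem_restrictTotalDegree _ _ p).mpr h1⟩, ?_, rfl⟩
        apply Subtype.ext
        simp only [hΔ', LinearMap.restrict_apply, ZeroMemClass.coe_zero]
        rwa [lap_apply]
    · rw [Submodule.finrank_map_subtype_eq]
      have hrank := LinearMap.finrank_range_add_finrank_ker Δ'
      rw [LinearMap.range_eq_top.mpr hΔsurj, finrank_top] at hrank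
      have hV' : Module.finrank ℝ V = (d + k).choose k := finrank_restrictTotalDegree d k
      have hW' : Module.finrank ℝ W = (d + (k - 2)).choose (k - 2) :=
        finrank_restrictTotalDegree d (k - 2)
      obtain ⟨a, ha⟩ := Nat.exists_eq_add_of_le hd
      obtain ⟨b, hb⟩ := Nat.exists_eq_add_of_le hk2'
      have key : (d + k).choose k =
          (d + (k - 2)).choose (k - 2) +
            ((d + k - 1).choose k + (d + k - 2).choose (k - 1)) := by
        subst ha hb
        have c1 : 1 + a + (2 + b) = a + b + 3 := by omega
        have c2 : (2 + b) = b + 2 := by omega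
        have c3 : 1 + a + (2 + b - 2) = a + b + 1 := by omega
        have c4 : 2 + b - 2 = b := by omega
        have c5 : 1 + a + (2 + b) - 1 = a + b + 2 := by omega
        have c6 : 1 + a + (2 + b) - 2 = a + b + 1 := by omega
        have c7 : 2 + b - 1 = b + 1 := by omega
        rw [c3, c4, c5, c6, c7, c1, c2]
        exact choose_arith a b
      omega
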